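/- Let $R$ be a commutative ring, $m \ge 1$ a fixed natural number, $a(1), \dots, a(m) \in R$ arbitrary initial values, and $p_1, \dots, p_m : \mathbb{N} \to R$ coefficient functions. Suppose the sequence $a$ satisfies the homogeneous linear recurrence $a(k) = p_1(k)\, a(k-m) + p_2(k)\, a(k-m+1) + \cdots + p_m(k)\, a(k-1)$ for all $k > m$. Then for every $k > m$, $a(k)$ equals the determinant of the $k \times k$ matrix $M$ over $R$ defined by: first row $M_{1,j} = a(j)$ for $1 \le j \le m$ and $M_{1,j} = 0$ for $m < j \le k$; subdiagonal entries $M_{c+1,c} = -1$ for $1 \le c \le k-1$; entries $M_{c-m+j,\,c} = p_j(c)$ for each column $c$ with $m+1 \le c \le k$ and each $j$ with $1 \le j \le m$ (and $c-m+j \ge 2$); and all other entries $0$. -/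

import Mathlib

private noncomputable def gAux {R : Type*} [CommRing R] (p : ℕ → ℕ → R) (m k : ℕ) : ℕ → R
  | 0 => 1
  | (d+1) =>
      ∑ c ∈ Finset.Icc (max (k - d - 1) m) (min (k - d - 2 + m) (k - 1)),
        p (k - d - 1 + m - c) (c + 1) * gAux p m k (min d (k - 1 - c))
  decreasing_by omega

private lemma gAux_zero {R : Type*} [CommRing R] (p : ℕ → ℕ → R) (m k : ℕ) :
    gAux p m k 0 = 1 := by simp only [gAux]

private lemma gAux_eq {R : Type*} [CommRing R] (p : ℕ → ℕ → R) (m k : ℕ)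
    (c : ℕ) (hc : c + 2 ≤ k) :
    gAux p m k (k - 1 - c) =
      ∑ c' ∈ Finset.Icc (max (c + 1) m) (min (c + m) (k - 1)),
        p (c + 1 + m - c') (c' + 1) * gAux p m k (k - 1 - c') := by
  have h1 : k - 1 - c = (k - 2 - c) + 1 := by omega
  rw [h1]; simp only [gAux]
  have h2 : k - (k - 2 - c) - 1 = c + 1 := by omega
  have h3 : k - (k - 2 - c) - 2 + m = c + m := by omega
  rw [h2, h3]
  refine Finset.sum_congr rfl fun c' hc' => ?_
  simp only [Finset.mem_Icc, max_le_iff, le_min_iff] at hc'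
  congr 1
  congr 1
  omega

private lemma rowA {R : Type*} [CommRing R] (p : ℕ → ℕ → R) (m k : ℕ)
    (hm : 1 ≤ m) (i : ℕ) (hi1 : 1 ≤ i) (hi2 : i ≤ k - 1) :
    ∑ j ∈ Finset.range k,
      (if i = j + 1 then (-1 : R)
        else if m ≤ j ∧ j + 1 ≤ i + m ∧ i ≤ j then p (i + m - j) (j + 1) else 0) *
        gAux p m k (k - 1 - j) = 0 := by
  have hk : 2 ≤ k := by omega
  have hsplit : ∀ j : ℕ,
      (if i = j + 1 then (-1 : R)
        else if m ≤ j ∧ j + 1 ≤ i + m ∧ i ≤ j then p (i + m - j) (j + 1) else 0) *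
        gAux p m k (k - 1 - j)
      = (if i = j + 1 then (-1 : R) else 0) * gAux p m k (k - 1 - j)
        + (if m ≤ j ∧ j + 1 ≤ i + m ∧ i ≤ j then p (i + m - j) (j + 1) else 0) *
            gAux p m k (k - 1 - j) := by
    intro j
    split_ifs with h1 h2 h2
    · omega
    · ring
    · ring
    · ring
  rw [Finset.sum_congr rfl fun j _ => hsplit j, Finset.sum_add_distrib]
  have hS1 : ∑ j ∈ Finset.range k,
      (if i = j + 1 then (-1 : R) else 0) * gAux p m k (k - 1 - j)
      = -gAux p m k (k - 1 - (i - 1)) := by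
    rw [Finset.sum_eq_single_of_mem (i - 1) (by simp; omega)]
    · rw [if_pos (by omega)]; ring
    · intro j _ hj
      rw [if_neg (by omega), zero_mul]
  have hS2 : ∑ j ∈ Finset.range k,
      (if m ≤ j ∧ j + 1 ≤ i + m ∧ i ≤ j then p (i + m - j) (j + 1) else 0) *
        gAux p m k (k - 1 - j)
      = ∑ j ∈ Finset.Icc (max i m) (min (i + m - 1) (k - 1)),
          p (i + m - j) (j + 1) * gAux p m k (k - 1 - j) := by
    rw [Finset.sum_congr rfl fun j _ => (ite_mul _ _ _ _).trans (by rw [zero_mul]),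
      Finset.sum_ite, Finset.sum_const_zero, add_zero]
    apply Finset.sum_congr _ fun j _ => rfl
    ext j
    simp only [Finset.mem_filter, Finset.mem_range, Finset.mem_Icc, max_le_iff, le_min_iff]
    omega
  rw [hS1, hS2]
  have := gAux_eq p m k (i - 1) (by omega)
  have e1 : i - 1 + 1 = i := by omega
  have e2 : i - 1 + m = i + m - 1 := by omega
  rw [e1, e2] at this
  rw [← this]
  ring

private lemma rowB {R : Type*} [CommRing R] (a : ℕ → R) (p : ℕ → ℕ → R) (m k : ℕ)
    (hm : 1 ≤ m) (hk : m < k)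
    (hrec : ∀ k' > m, a k' = ∑ j ∈ Finset.Icc 1 m, p j k' * a (k' - m + j - 1)) :
    ∑ j ∈ Finset.range k, (if j + 1 ≤ m then a (j + 1) else 0) * gAux p m k (k - 1 - j)
      = a k := by
  have step0 : ∑ j ∈ Finset.range k,
      (if j + 1 ≤ m then a (j + 1) else 0) * gAux p m k (k - 1 - j)
      = ∑ j ∈ Finset.range m, a (j + 1) * gAux p m k (k - 1 - j) := by
    rw [Finset.sum_congr rfl fun j _ => (ite_mul _ _ _ _).trans (by rw [zero_mul]),
      Finset.sum_ite, Finset.sum_const_zero, add_zero]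
    apply Finset.sum_congr _ fun j _ => rfl
    ext j
    simp only [Finset.mem_filter, Finset.mem_range]
    omega
  have claim : ∑ i ∈ Finset.range (k - 1), a (i + 1) * gAux p m k (k - 1 - i)
      = ∑ c ∈ Finset.Ico m k, a (c + 1) * gAux p m k (k - 1 - c) := by
    have lhs_exp : ∑ i ∈ Finset.range (k - 1), a (i + 1) * gAux p m k (k - 1 - i)
        = ∑ i ∈ Finset.range (k - 1), ∑ c ∈ Finset.Icc (max (i + 1) m) (min (i + m) (k - 1)),
            a (i + 1) * (p (i + 1 + m - c) (c + 1) * gAux p m k (k - 1 - c)) := by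
      refine Finset.sum_congr rfl fun i hi => ?_
      simp only [Finset.mem_range] at hi
      rw [gAux_eq p m k i (by omega), Finset.mul_sum]
    have rhs_exp : ∑ c ∈ Finset.Ico m k, a (c + 1) * gAux p m k (k - 1 - c)
        = ∑ c ∈ Finset.Ico m k, ∑ j ∈ Finset.Icc 1 m,
            p j (c + 1) * a (c + 1 - m + j - 1) * gAux p m k (k - 1 - c) := by
      refine Finset.sum_congr rfl fun c hc => ?_
      simp only [Finset.mem_Ico] at hc
      rw [hrec (c + 1) (by omega), Finset.sum_mul]
    rw [lhs_exp, rhs_exp, Finset.sum_sigma', Finset.sum_sigma']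
    refine Finset.sum_nbij' (fun x => ⟨x.2, x.1 + 1 + m - x.2⟩)
      (fun x => ⟨x.1 + x.2 - m - 1, x.1⟩) ?_ ?_ ?_ ?_ ?_
    · rintro ⟨i, c⟩ hx
      simp only [Finset.mem_sigma, Finset.mem_range, Finset.mem_Icc, Finset.mem_Ico,
        max_le_iff, le_min_iff] at hx ⊢
      omega
    · rintro ⟨c, j⟩ hx
      simp only [Finset.mem_sigma, Finset.mem_range, Finset.mem_Icc, Finset.mem_Ico,
        max_le_iff, le_min_iff] at hx ⊢
      omega
    · rintro ⟨i, c⟩ hx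
      simp only [Finset.mem_sigma, Finset.mem_range, Finset.mem_Icc, max_le_iff,
        le_min_iff] at hx
      have e1 : c + (i + 1 + m - c) - m - 1 = i := by omega
      simp only [Sigma.mk.inj_iff, e1, heq_eq_eq, and_self]
    · rintro ⟨c, j⟩ hx
      simp only [Finset.mem_sigma, Finset.mem_Icc, Finset.mem_Ico] at hx
      have e1 : c + j - m - 1 + 1 + m - c = j := by omega
      simp only [Sigma.mk.inj_iff, e1, heq_eq_eq, and_self]
    · rintro ⟨i, c⟩ hx
      simp only [Finset.mem_sigma, Finset.mem_range, Finset.mem_Icc, max_le_iff,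
        le_min_iff] at hx
      have e1 : c + 1 - m + (i + 1 + m - c) - 1 = i + 1 := by omega
      simp only [e1]
      ring
  have hsplitL : ∑ i ∈ Finset.range (k - 1), a (i + 1) * gAux p m k (k - 1 - i)
      = ∑ j ∈ Finset.range m, a (j + 1) * gAux p m k (k - 1 - j)
        + ∑ c ∈ Finset.Ico m (k - 1), a (c + 1) * gAux p m k (k - 1 - c) := by
    rw [Finset.range_eq_Ico, Finset.range_eq_Ico]
    exact (Finset.sum_Ico_consecutive (fun i => a (i + 1) * gAux p m k (k - 1 - i)) (Nat.zero_le m) (by omega : m ≤ k - 1)).symm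
  have hsplitR : ∑ c ∈ Finset.Ico m k, a (c + 1) * gAux p m k (k - 1 - c)
      = ∑ c ∈ Finset.Ico m (k - 1), a (c + 1) * gAux p m k (k - 1 - c)
        + a (k - 1 + 1) * gAux p m k (k - 1 - (k - 1)) := by
    have hk1 : k = (k - 1) + 1 := by omega
    rw [hk1]
    rw [Finset.sum_Ico_succ_top (by omega : m ≤ k - 1)]
    simp only [Nat.add_sub_cancel]
  rw [step0]
  have hfin : gAux p m k (k - 1 - (k - 1)) = 1 := by
    rw [Nat.sub_self, gAux_zero]
  have hk1 : k - 1 + 1 = k := by omega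
  rw [hsplitL, hsplitR, hfin, hk1, mul_one] at claim
  exact add_right_cancel (claim.trans (add_comm _ _))


/-- **Closed formula for homogeneous linear recurrences.**
Let `R` be a commutative ring, `m ≥ 1`, `a : ℕ → R` a sequence (indexed from 1), and
`p j : ℕ → R` (for `1 ≤ j ≤ m`) coefficient functions such that
`a k = p 1 k * a (k-m) + p 2 k * a (k-m+1) + ⋯ + p m k * a (k-1)` for all `k > m`.
Then for every `k > m`, `a k` equals the determinant of the `k × k` matrix `M` (1-based
indices `r, c`) with first row `M 1 c = a c` for `c ≤ m` and `0` for `c > m`;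
subdiagonal entries `M (c+1) c = -1`; entries `M (c-m+j) c = p j c` for columns
`c ≥ m+1` and `1 ≤ j ≤ m` (with row `c-m+j ≥ 2`); and all other entries `0`. -/
theorem linear_recurrence_as_det (R : Type*) [CommRing R] (m : ℕ) (hm : 1 ≤ m)
    (a : ℕ → R) (p : ℕ → ℕ → R)
    (hrec : ∀ k > m, a k = ∑ j ∈ Finset.Icc 1 m, p j k * a (k - m + j - 1)) :
    ∀ k > m, a k =
      Matrix.det (Matrix.of (fun i j : Fin k =>
        if (i : ℕ) = 0 then (if (j : ℕ) + 1 ≤ m then a ((j : ℕ) + 1) else 0)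
        else if (i : ℕ) = (j : ℕ) + 1 then -1
        else if m ≤ (j : ℕ) ∧ (j : ℕ) + 1 ≤ (i : ℕ) + m ∧ (i : ℕ) ≤ (j : ℕ) then
          p ((i : ℕ) + m - (j : ℕ)) ((j : ℕ) + 1)
        else 0)) := by
  intro k hk
  obtain ⟨n, rfl⟩ : ∃ n, k = n + 1 := ⟨k - 1, by omega⟩
  set M : Matrix (Fin (n + 1)) (Fin (n + 1)) R := Matrix.of (fun i j : Fin (n + 1) =>
        if (i : ℕ) = 0 then (if (j : ℕ) + 1 ≤ m then a ((j : ℕ) + 1) else 0)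
        else if (i : ℕ) = (j : ℕ) + 1 then -1
        else if m ≤ (j : ℕ) ∧ (j : ℕ) + 1 ≤ (i : ℕ) + m ∧ (i : ℕ) ≤ (j : ℕ) then
          p ((i : ℕ) + m - (j : ℕ)) ((j : ℕ) + 1)
        else 0) with hMdef
  -- the vector y
  have hMy : M.mulVec (fun c : Fin (n + 1) => gAux p m (n + 1) (n + 1 - 1 - (c : ℕ)))
      = fun i : Fin (n + 1) => if (i : ℕ) = 0 then a (n + 1) else 0 := by
    funext i
    simp only [Matrix.mulVec, dotProduct, hMdef, Matrix.of_apply]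
    rw [Fin.sum_univ_eq_sum_range (fun jn =>
      (if (i : ℕ) = 0 then (if jn + 1 ≤ m then a (jn + 1) else 0)
        else if (i : ℕ) = jn + 1 then -1
        else if m ≤ jn ∧ jn + 1 ≤ (i : ℕ) + m ∧ (i : ℕ) ≤ jn then
          p ((i : ℕ) + m - jn) (jn + 1)
        else 0) * gAux p m (n + 1) (n + 1 - 1 - jn)) (n + 1)]
    by_cases hi : (i : ℕ) = 0
    · simp only [hi, if_pos rfl]
      exact rowB a p m (n + 1) hm (by omega) hrec
    · simp only [if_neg hi]
      have hlt := i.isLt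
      exact rowA p m (n + 1) hm (i : ℕ) (by omega) (by omega)
  -- determinant of the auxiliary matrix
  have hdet1 : (M.updateCol (Fin.last n) (Pi.single 0 1)).det = 1 := by
    rw [Matrix.det_succ_column (M.updateCol (Fin.last n) (Pi.single 0 1)) (Fin.last n)]
    rw [Finset.sum_eq_single_of_mem (0 : Fin (n + 1)) (Finset.mem_univ _)]
    · have hN0 : (M.updateCol (Fin.last n) (Pi.single 0 1)) 0 (Fin.last n) = 1 := by
        rw [Matrix.updateCol_self, Pi.single_eq_same]
      have htri : ((M.updateCol (Fin.last n) (Pi.single 0 1)).submatrix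
          (Fin.succAbove 0) (Fin.succAbove (Fin.last n))).BlockTriangular id := by
        intro i j hij
        have hj : (j : ℕ) < (i : ℕ) := hij
        simp only [Matrix.submatrix_apply, Fin.succAbove_zero, Fin.succAbove_last]
        rw [Matrix.updateCol_ne (ne_of_lt (Fin.castSucc_lt_last j))]
        simp only [hMdef, Matrix.of_apply, Fin.val_succ, Fin.coe_castSucc]
        rw [if_neg (by omega), if_neg (by omega), if_neg (by omega)]
      have hdiag : ∀ i : Fin n, ((M.updateCol (Fin.last n) (Pi.single 0 1)).submatrix
          (Fin.succAbove 0) (Fin.succAbove (Fin.last n))) i i = -1 := by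
        intro i
        simp only [Matrix.submatrix_apply, Fin.succAbove_zero, Fin.succAbove_last]
        rw [Matrix.updateCol_ne (ne_of_lt (Fin.castSucc_lt_last i))]
        simp only [hMdef, Matrix.of_apply, Fin.val_succ, Fin.coe_castSucc]
        rw [if_neg (by omega)]
        simp
      rw [Matrix.det_of_upperTriangular htri, hN0,
        Finset.prod_congr rfl (fun i _ => hdiag i), Finset.prod_const,
        Finset.card_univ, Fintype.card_fin]
      simp only [Fin.val_zero, Fin.val_last, zero_add, mul_one]
      rw [← pow_add]
      exact Even.neg_one_pow ⟨n, rfl⟩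
    · intro i _ hi
      have : (M.updateCol (Fin.last n) (Pi.single 0 1)) i (Fin.last n) = 0 := by
        rw [Matrix.updateCol_self]
        exact Pi.single_eq_of_ne hi 1
      rw [this]
      ring
  -- Cramer assembly
  have h0 : (fun i : Fin (n + 1) => if (i : ℕ) = 0 then a (n + 1) else 0)
      = a (n + 1) • (Pi.single (0 : Fin (n + 1)) (1 : R) : Fin (n + 1) → R) := by
    funext i
    by_cases h : i = 0
    · subst h; simp
    · have : (i : ℕ) ≠ 0 := by
        exact fun h' => h (Fin.ext h')
      simp [this, Pi.single_eq_of_ne h]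
  have hcram : M.det • (fun c : Fin (n + 1) => gAux p m (n + 1) (n + 1 - 1 - (c : ℕ)))
      = a (n + 1) • Matrix.cramer M (Pi.single 0 1) := by
    calc M.det • (fun c : Fin (n + 1) => gAux p m (n + 1) (n + 1 - 1 - (c : ℕ)))
        = (M.det • (1 : Matrix (Fin (n + 1)) (Fin (n + 1)) R)).mulVec
            (fun c : Fin (n + 1) => gAux p m (n + 1) (n + 1 - 1 - (c : ℕ))) := by
          rw [Matrix.smul_mulVec, Matrix.one_mulVec]
      _ = (M.adjugate * M).mulVec _ := by rw [Matrix.adjugate_mul]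
      _ = M.adjugate.mulVec (M.mulVec _) := by rw [Matrix.mulVec_mulVec]
      _ = M.adjugate.mulVec (a (n + 1) • (Pi.single (0 : Fin (n + 1)) (1 : R) : Fin (n + 1) → R)) := by rw [hMy, h0]
      _ = a (n + 1) • (M.adjugate.mulVec (Pi.single (0 : Fin (n + 1)) (1 : R) : Fin (n + 1) → R)) := by rw [Matrix.mulVec_smul]
      _ = a (n + 1) • Matrix.cramer M (Pi.single 0 1) := by
          rw [Matrix.cramer_eq_adjugate_mulVec]
  have hfinal := congrFun hcram (Fin.last n)
  simp only [Pi.smul_apply, smul_eq_mul, Matrix.cramer_apply, Fin.val_last] at hfinal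
  rw [show n + 1 - 1 - n = 0 by omega, gAux_zero, mul_one, hdet1, mul_one] at hfinal
  exact hfinal.symm
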